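/- arXiv:1809.06583 — 2 statements merged into one kernel-verified Lean document; each statement's English description precedes it below -/
import Mathlib

section
/- Let T be a positive bounded operator on A²_ρ with Berezin transform T̃(z) = ⟨T k_z, k_z⟩, and let p ≥ 1. If T belongs to the Schatten class S_p, then ∫_{𝔹_n} T̃(z)^p dλ_ρ(z) < ∞, where dλ_ρ(z) = 2^k ρ(z)(1-|z|)^{-n} dv(z) for z ∈ Ω_k. -/
open MeasureTheory
open scoped ENNReal NNReal

noncomputable section

set_option maxHeartbeats 1000000

section AuxStmt16

variable {H : Type*} [NormedAddCommGroup H] [InnerProductSpace ℂ H] [CompleteSpace H]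

private lemma aux_inner_mono {T D : H →L[ℂ] H} (h : T ≤ D) (u : H) :
    (inner ℂ u (T u) : ℂ).re ≤ (inner ℂ u (D u) : ℂ).re := by
  have h2 := ((ContinuousLinearMap.le_def T D).1 h).inner_nonneg_right u
  rw [ContinuousLinearMap.sub_apply, inner_sub_right] at h2
  have h3 := (Complex.nonneg_iff.1 h2).1
  rw [Complex.sub_re] at h3
  linarith

private lemma aux_rpow_eq_cfc_real (T : H →L[ℂ] H) (hT : 0 ≤ T) (p : ℝ) :
    CFC.rpow T p = cfc (fun x : ℝ => x ^ p) T := by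
  rw [CFC.rpow, cfc_nnreal_eq_real _ _ hT]
  apply cfc_congr
  intro x hx
  have hx0 : 0 ≤ x := spectrum_nonneg_of_nonneg hT hx
  simp [NNReal.coe_rpow, Real.coe_toNNReal x hx0]

private lemma aux_op_young (T : H →L[ℂ] H) (hT : 0 ≤ T) {p q : ℝ} (hpq : p.HolderConjugate q)
    (lam : ℝ) (hlam : 0 < lam) :
    T ≤ (lam ^ (-p) / p) • CFC.rpow T p + (lam ^ q / q) • 1 := by
  have hp0 : (0:ℝ) < p := hpq.pos
  have hcont : ContinuousOn (fun x : ℝ => x ^ p) (spectrum ℝ T) :=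
    (Real.continuous_rpow_const hp0.le).continuousOn
  have hcont2 : ContinuousOn (fun x : ℝ => lam ^ (-p) / p * x ^ p + lam ^ q / q)
      (spectrum ℝ T) := by fun_prop
  have key : T ≤ cfc (fun x : ℝ => lam ^ (-p) / p * x ^ p + lam ^ q / q) T := by
    nth_rewrite 1 [← cfc_id ℝ T]
    refine cfc_mono ?_ continuousOn_id hcont2
    · intro x hx
      have hx0 : 0 ≤ x := spectrum_nonneg_of_nonneg hT hx
      have hy := Real.young_inequality_of_nonneg (div_nonneg hx0 hlam.le) hlam.le hpq
      rw [div_mul_cancel₀ x hlam.ne', Real.div_rpow hx0 hlam.le] at hy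
      rw [Real.rpow_neg hlam.le]
      calc (id x : ℝ) = x := rfl
        _ ≤ x ^ p / lam ^ p / p + lam ^ q / q := hy
        _ = (lam ^ p)⁻¹ / p * x ^ p + lam ^ q / q := by ring
  refine key.trans (le_of_eq ?_)
  rw [cfc_add (a := T) _ _ (by fun_prop) (by fun_prop), cfc_const_mul _ _ T hcont,
    cfc_const _ T, ← aux_rpow_eq_cfc_real T hT, Algebra.algebraMap_eq_smul_one]

private lemma aux_mccarthy (T : H →L[ℂ] H) (hT : T.IsPositive) (p : ℝ) (hp : 1 ≤ p)
    (u : H) (hu : ‖u‖ = 1) :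
    ((inner ℂ u (T u) : ℂ).re) ^ p ≤ ((inner ℂ u (CFC.rpow T p u) : ℂ)).re := by
  have hTnn : 0 ≤ T := T.nonneg_iff_isPositive.2 hT
  have hA : 0 ≤ (inner ℂ u (T u) : ℂ).re := by
    exact (Complex.nonneg_iff.1 (hT.inner_nonneg_right u)).1
  have hSnn : (0:H→L[ℂ]H) ≤ CFC.rpow T p := by rw [CFC.rpow]; exact cfc_predicate _ _
  have hB : 0 ≤ (inner ℂ u (CFC.rpow T p u) : ℂ).re := by
    exact (Complex.nonneg_iff.1 (((ContinuousLinearMap.nonneg_iff_isPositive _).1 hSnn).inner_nonneg_right u)).1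
  rcases eq_or_lt_of_le hp with hp1 | hp1
  · rw [← hp1, Real.rpow_one]
    have : CFC.rpow T (1:ℝ) = T := CFC.rpow_one T hTnn
    rw [this]
  set A := (inner ℂ u (T u) : ℂ).re with hAdef
  set B := (inner ℂ u (CFC.rpow T p u) : ℂ).re with hBdef
  have hpq : p.HolderConjugate (Real.conjExponent p) := Real.HolderConjugate.conjExponent hp1
  set q := Real.conjExponent p with hqdef
  have hq0 : 0 < q := hpq.symm.pos
  have hbound : ∀ lam : ℝ, 0 < lam → A ≤ lam ^ (-p) / p * B + lam ^ q / q := by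
    intro lam hlam
    have h1 := aux_inner_mono (aux_op_young T hTnn hpq lam hlam) u
    rw [ContinuousLinearMap.add_apply, inner_add_right, ContinuousLinearMap.smul_apply,
      ContinuousLinearMap.smul_apply, RCLike.real_smul_eq_coe_smul (K := ℂ),
      RCLike.real_smul_eq_coe_smul (K := ℂ), inner_smul_real_right, inner_smul_real_right,
      ContinuousLinearMap.one_apply] at h1
    have huu : (inner ℂ u u : ℂ).re = 1 := by
      have := inner_self_eq_norm_sq (𝕜 := ℂ) u
      simp only [RCLike.re_to_complex] at this
      rw [this, hu, one_pow]
    simp only [Complex.add_re, Complex.smul_re, smul_eq_mul] at h1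
    calc A ≤ (lam ^ (-p) / p) * (inner ℂ u (CFC.rpow T p u) : ℂ).re
          + (lam ^ q / q) * (inner ℂ u u : ℂ).re := h1
      _ = lam ^ (-p) / p * B + lam ^ q / q := by rw [huu]; ring
  rcases eq_or_lt_of_le hB with hB0 | hB0
  · have hA0 : A = 0 := by
      by_contra hne
      have hApos : 0 < A := lt_of_le_of_ne hA (Ne.symm hne)
      set lam := (A * q / 2) ^ (q⁻¹) with hlam
      have hpos : 0 < A * q / 2 := by positivity
      have hlampos : 0 < lam := Real.rpow_pos_of_pos hpos _
      have hlamq : lam ^ q = A * q / 2 :=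
        Real.rpow_inv_rpow hpos.le hq0.ne'
      have := hbound lam hlampos
      rw [← hB0, mul_zero, zero_add, hlamq] at this
      have h4 : A * q / 2 / q = A / 2 := by field_simp
      rw [h4] at this
      linarith
    rw [hA0, ← hB0, Real.zero_rpow (by positivity)]
  · set lam := B ^ ((p*q)⁻¹) with hlam
    have hlampos : 0 < lam := Real.rpow_pos_of_pos hB0 _
    have h1 : lam ^ (-p) = B ^ (-q⁻¹) := by
      rw [hlam, ← Real.rpow_mul hB0.le]
      congr 1
      field_simp
    have h2 : lam ^ q = B ^ p⁻¹ := by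
      rw [hlam, ← Real.rpow_mul hB0.le]
      congr 1
      field_simp
    have h3 : B ^ (-q⁻¹) * B = B ^ p⁻¹ := by
      nth_rewrite 2 [← Real.rpow_one B]
      rw [← Real.rpow_add hB0]
      congr 1
      have := hpq.inv_add_inv_eq_one
      linarith
    have hAle : A ≤ B ^ p⁻¹ := by
      have := hbound lam hlampos
      rw [h1, h2] at this
      calc A ≤ B ^ (-q⁻¹) / p * B + B ^ p⁻¹ / q := this
        _ = B ^ p⁻¹ * (p⁻¹ + q⁻¹) := by rw [div_mul_eq_mul_div, h3]; ring
        _ = B ^ p⁻¹ := by rw [hpq.inv_add_inv_eq_one, mul_one]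
    calc A ^ p ≤ (B ^ p⁻¹) ^ p := Real.rpow_le_rpow hA hAle (by positivity)
      _ = B := Real.rpow_inv_rpow hB0.le (by positivity)

private lemma aux_parseval (e : HilbertBasis ℕ ℂ H) (v : H) :
    ENNReal.ofReal (‖v‖^2) = ∑' l, ((‖(inner ℂ (e l) v : ℂ)‖₊ : ℝ≥0∞))^2 := by
  have h := e.hasSum_inner_mul_inner v v
  have h2 : HasSum (fun i => ‖(inner ℂ (e i) v : ℂ)‖^2) (‖v‖^2) := by
    have hre := h.mapL Complex.reCLM
    have hpt : ∀ i, Complex.reCLM ((inner ℂ v (e i) : ℂ) * (inner ℂ (e i) v : ℂ))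
        = ‖(inner ℂ (e i) v : ℂ)‖^2 := by
      intro i
      have : (inner ℂ v (e i) : ℂ) = starRingEnd ℂ (inner ℂ (e i) v : ℂ) :=
        (inner_conj_symm _ _).symm
      simp only [Complex.reCLM_apply, this]
      rw [← Complex.normSq_eq_conj_mul_self]
      simp [Complex.normSq_eq_norm_sq, ← Complex.ofReal_pow]
    have hv : Complex.reCLM (inner ℂ v v : ℂ) = ‖v‖^2 := by
      have := inner_self_eq_norm_sq (𝕜 := ℂ) v
      simpa [RCLike.re_to_complex] using this
    rw [hv] at hre
    exact funext hpt ▸ hre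
  rw [← h2.tsum_eq, ENNReal.ofReal_tsum_of_nonneg (fun i => sq_nonneg _) h2.summable]
  exact tsum_congr fun l => by
    rw [ENNReal.ofReal_pow (norm_nonneg _), ofReal_norm, enorm_eq_nnnorm]

private lemma aux_QQ (T : H →L[ℂ] H) (p : ℝ) (hp : 0 < p) :
    CFC.rpow T (p/2) * CFC.rpow T (p/2) = CFC.rpow T p := by
  have hc : ContinuousOn (fun x : ℝ≥0 => x ^ (p/2)) (spectrum ℝ≥0 T) :=
    (NNReal.continuous_rpow_const (by linarith)).continuousOn
  rw [CFC.rpow, CFC.rpow, ← cfc_mul _ _ T hc hc]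
  apply cfc_congr
  intro x hx
  show x ^ (p/2) * x ^ (p/2) = x ^ p
  rw [← NNReal.rpow_add' (by linarith : p/2 + p/2 ≠ 0)]
  norm_num

private lemma aux_inner_sq (Q : H →L[ℂ] H) (hQ : IsSelfAdjoint Q) (x : H) :
    (inner ℂ x ((Q * Q) x) : ℂ).re = ‖Q x‖^2 := by
  rw [ContinuousLinearMap.mul_apply]
  nth_rewrite 1 [← hQ.adjoint_eq]
  rw [ContinuousLinearMap.adjoint_inner_right]
  have := inner_self_eq_norm_sq (𝕜 := ℂ) (Q x)
  simpa [RCLike.re_to_complex] using this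

private lemma aux_scale (S : H →L[ℂ] H) (x : H) (hx : x ≠ 0) :
    (inner ℂ ((‖x‖⁻¹:ℝ) • x) (S ((‖x‖⁻¹:ℝ) • x)) : ℂ).re * ‖x‖^2
      = (inner ℂ x (S x) : ℂ).re := by
  have hxn : ‖x‖ ≠ 0 := norm_ne_zero_iff.2 hx
  rw [RCLike.real_smul_eq_coe_smul (K := ℂ), _root_.map_smul, inner_smul_real_left,
    inner_smul_real_right]
  simp only [Complex.smul_re, smul_eq_mul]
  field_simp

end AuxStmt16

/-- Borel structure on `ℂⁿ` with the Euclidean norm. -/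
instance (n : ℕ) : MeasurableSpace (EuclideanSpace ℂ (Fin n)) := borel _

instance (n : ℕ) : BorelSpace (EuclideanSpace ℂ (Fin n)) := ⟨rfl⟩

/-- Lebesgue measure on `ℂⁿ` with the Euclidean norm, transported from `Fin n → ℂ`. -/
instance (n : ℕ) : MeasureSpace (EuclideanSpace ℂ (Fin n)) :=
  ⟨Measure.map (WithLp.equiv 2 (Fin n → ℂ)).symm volume⟩

/-- See the docstring body: Schatten class membership of a
positive operator `T` on `A²_ρ` (ρ ∈ S, realized abstractly with kernel functions
`K z`, `‖K z‖² ≍ 2^{κ z}(1-|z|)^{-n}` on `Ω_{κ z}`) versus integrability of the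
Berezin transform `T̃(z) = ⟨T k_z, k_z⟩` against `dλ_ρ(z) = 2^{κ z} ρ(|z|)(1-|z|)^{-n} dv(z)`.
Membership `T ∈ S_p` is expressed by finiteness of `tr(T^p) = Σ_l ⟨T^p e_l, e_l⟩`. -/
theorem stmt16 (n : ℕ) (hn : 0 < n) (ρ : ℝ → ℝ) (hρ : Measurable ρ)
    (hρpos : ∀ x ∈ Set.Ico (0:ℝ) 1, 0 < ρ x)
    (r : ℕ → ℝ)
    (hr : ∀ k, r k ∈ Set.Ico (0:ℝ) 1)
    (hrk : ∀ k, ∫ x in (r k)..1, ρ x = (2:ℝ) ^ (-(k:ℝ)))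
    (hS : ∃ A > (1:ℝ), ∀ k, A ≤ (1 - r k) / (1 - r (k+1)))
    (κ : EuclideanSpace ℂ (Fin n) → ℕ) (hκmeas : Measurable κ)
    (hκ : ∀ z ∈ Metric.ball (0 : EuclideanSpace ℂ (Fin n)) 1,
      r (κ z) ≤ ‖z‖ ∧ ‖z‖ < r (κ z + 1))
    (H : Type*) [NormedAddCommGroup H] [InnerProductSpace ℂ H] [CompleteSpace H]
    (ι : H →ₗ[ℂ] EuclideanSpace ℂ (Fin n) → ℂ)
    (K : EuclideanSpace ℂ (Fin n) → H)
    (hKcont : Continuous K)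
    (hKne : ∀ z ∈ Metric.ball (0 : EuclideanSpace ℂ (Fin n)) 1, K z ≠ 0)
    (hrep : ∀ (f : H), ∀ z ∈ Metric.ball (0 : EuclideanSpace ℂ (Fin n)) 1,
      ι f z = (inner ℂ (K z) f : ℂ))
    (hmeas : ∀ f : H, Measurable (ι f))
    (hnorm : ∀ f : H,
      ∫⁻ z in Metric.ball (0 : EuclideanSpace ℂ (Fin n)) 1,
        (‖ι f z‖₊ : ℝ≥0∞) ^ 2 * ENNReal.ofReal (ρ ‖z‖) ∂volume = (‖f‖₊ : ℝ≥0∞) ^ 2)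
    (hKsize : ∃ c > (0:ℝ), ∃ C > (0:ℝ),
      ∀ z ∈ Metric.ball (0 : EuclideanSpace ℂ (Fin n)) 1,
        c * (2:ℝ) ^ (κ z) / (1 - ‖z‖) ^ n ≤ ‖K z‖ ^ 2 ∧
        ‖K z‖ ^ 2 ≤ C * (2:ℝ) ^ (κ z) / (1 - ‖z‖) ^ n)
    (T : H →L[ℂ] H) (hT : T.IsPositive) (p : ℝ) (hp : 1 ≤ p)
    (e : HilbertBasis ℕ ℂ H)
    (hmem : ∑' l : ℕ, ENNReal.ofReal ((inner ℂ (e l) (CFC.rpow T p (e l)) : ℂ).re) < ⊤) :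
    ∫⁻ z in Metric.ball (0 : EuclideanSpace ℂ (Fin n)) 1,
      ENNReal.ofReal
        (((inner ℂ ((‖K z‖⁻¹ : ℝ) • K z) (T ((‖K z‖⁻¹ : ℝ) • K z)) : ℂ).re) ^ p
          * (2:ℝ) ^ (κ z) * ρ ‖z‖ / (1 - ‖z‖) ^ n) ∂volume < ⊤ := by
  obtain ⟨c, hc, C, hC, hK2⟩ := hKsize
  have hTnn : 0 ≤ T := T.nonneg_iff_isPositive.2 hT
  have hp0 : (0:ℝ) < p := lt_of_lt_of_le one_pos hp
  set S := CFC.rpow T p with hSdef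
  have hSnn : (0:H →L[ℂ] H) ≤ S := by rw [hSdef, CFC.rpow]; exact cfc_predicate _ _
  set Q := CFC.rpow T (p/2) with hQdef
  have hQnn : (0:H →L[ℂ] H) ≤ Q := by rw [hQdef, CFC.rpow]; exact cfc_predicate _ _
  have hQsa : IsSelfAdjoint Q := .of_nonneg hQnn
  have hQQ : Q * Q = S := aux_QQ T p hp0
  have hQS : ∀ x : H, (inner ℂ x (S x) : ℂ).re = ‖Q x‖^2 := fun x => by
    rw [← hQQ]; exact aux_inner_sq Q hQsa x
  have htr : ∀ l : ℕ, (‖Q (e l)‖₊ : ℝ≥0∞)^2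
      = ENNReal.ofReal ((inner ℂ (e l) (S (e l)) : ℂ).re) := fun l => by
    rw [hQS, ENNReal.ofReal_pow (norm_nonneg _), ofReal_norm, enorm_eq_nnnorm]
  have hmem' : ∑' l : ℕ, (‖Q (e l)‖₊ : ℝ≥0∞)^2 < ⊤ := by
    rw [tsum_congr htr]; exact hmem
  have hρmeas : Measurable fun z : EuclideanSpace ℂ (Fin n) => ENNReal.ofReal (ρ ‖z‖) :=
    (hρ.comp measurable_norm).ennreal_ofReal
  have hmeasG : ∀ l : ℕ, Measurable fun z : EuclideanSpace ℂ (Fin n) =>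
      ((‖ι (Q (e l)) z‖₊ : ℝ≥0∞))^2 * ENNReal.ofReal (ρ ‖z‖) := fun l =>
    (((hmeas (Q (e l))).nnnorm.coe_nnreal_ennreal).pow_const 2).mul hρmeas
  have key1 : ∀ z ∈ Metric.ball (0:EuclideanSpace ℂ (Fin n)) 1,
      ENNReal.ofReal ((inner ℂ (K z) (S (K z)) : ℂ).re * ρ ‖z‖)
        = ∑' l : ℕ, ((‖ι (Q (e l)) z‖₊ : ℝ≥0∞))^2 * ENNReal.ofReal (ρ ‖z‖) := by
    intro z hz
    rw [ENNReal.tsum_mul_right, ENNReal.ofReal_mul (by rw [hQS]; positivity)]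
    congr 1
    rw [hQS, aux_parseval e (Q (K z))]
    refine tsum_congr fun l => ?_
    congr 2
    apply NNReal.coe_injective
    have h1 : ι (Q (e l)) z = inner ℂ (K z) (Q (e l)) := hrep _ z hz
    have h2 : (inner ℂ (K z) (Q (e l)) : ℂ) = inner ℂ (Q (K z)) (e l) := by
      nth_rewrite 1 [← hQsa.adjoint_eq]
      exact ContinuousLinearMap.adjoint_inner_right Q (K z) (e l)
    simp only [coe_nnnorm]
    rw [h1, h2, norm_inner_symm]
  have hI : ∫⁻ z in Metric.ball (0:EuclideanSpace ℂ (Fin n)) 1,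
      ENNReal.ofReal ((inner ℂ (K z) (S (K z)) : ℂ).re * ρ ‖z‖) ∂volume
      = ∑' l : ℕ, (‖Q (e l)‖₊ : ℝ≥0∞)^2 := by
    rw [setLIntegral_congr_fun measurableSet_ball (fun z hz => key1 z hz),
      lintegral_tsum (fun l => ((hmeasG l).aemeasurable))]
    exact tsum_congr fun l => hnorm (Q (e l))
  have hpt : ∀ z : EuclideanSpace ℂ (Fin n), z ∈ Metric.ball (0:EuclideanSpace ℂ (Fin n)) 1 →
      ENNReal.ofReal (((inner ℂ ((‖K z‖⁻¹ : ℝ) • K z) (T ((‖K z‖⁻¹ : ℝ) • K z)) : ℂ).re) ^ p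
          * (2:ℝ) ^ (κ z) * ρ ‖z‖ / (1 - ‖z‖) ^ n)
        ≤ ENNReal.ofReal c⁻¹ * ENNReal.ofReal ((inner ℂ (K z) (S (K z)) : ℂ).re * ρ ‖z‖) := by
    intro z hz
    have hz1 : ‖z‖ < 1 := mem_ball_zero_iff.1 hz
    have hKz : K z ≠ 0 := hKne z hz
    have hKn0 : ‖K z‖ ≠ 0 := norm_ne_zero_iff.2 hKz
    have hu : ‖(‖K z‖⁻¹ : ℝ) • K z‖ = 1 := by
      rw [norm_smul, Real.norm_eq_abs, abs_of_nonneg (by positivity), inv_mul_cancel₀ hKn0]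
    set u := (‖K z‖⁻¹ : ℝ) • K z with hudef
    have hρz : 0 < ρ ‖z‖ := hρpos _ ⟨norm_nonneg z, hz1⟩
    have hdz : (0:ℝ) < 1 - ‖z‖ := by linarith
    have hA : 0 ≤ (inner ℂ u (T u) : ℂ).re := by exact (Complex.nonneg_iff.1 (hT.inner_nonneg_right u)).1
    have hMc : ((inner ℂ u (T u) : ℂ).re) ^ p ≤ (inner ℂ u (S u) : ℂ).re :=
      aux_mccarthy T hT p hp u hu
    have hB : 0 ≤ (inner ℂ u (S u) : ℂ).re := by
      exact (Complex.nonneg_iff.1 (((ContinuousLinearMap.nonneg_iff_isPositive _).1 hSnn).inner_nonneg_right u)).1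
    have hscale : (inner ℂ u (S u) : ℂ).re * ‖K z‖^2 = (inner ℂ (K z) (S (K z)) : ℂ).re :=
      aux_scale S (K z) hKz
    set A := (inner ℂ u (T u) : ℂ).re with hAdef
    set B := (inner ℂ u (S u) : ℂ).re with hBdef
    set D := (2:ℝ) ^ (κ z) / (1 - ‖z‖) ^ n with hDdef
    have hD : 0 ≤ D := by positivity
    have hcd : c * D ≤ ‖K z‖^2 := by
      rw [hDdef, ← mul_div_assoc]; exact (hK2 z hz).1
    have hreal : A ^ p * (2:ℝ) ^ (κ z) * ρ ‖z‖ / (1 - ‖z‖) ^ n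
        ≤ c⁻¹ * ((inner ℂ (K z) (S (K z)) : ℂ).re * ρ ‖z‖) := by
      have e1 : A ^ p * (2:ℝ) ^ (κ z) * ρ ‖z‖ / (1 - ‖z‖) ^ n = (A ^ p * ρ ‖z‖) * D := by
        rw [hDdef]; ring
      rw [e1, ← hscale]
      calc (A ^ p * ρ ‖z‖) * D ≤ (B * ρ ‖z‖) * D := by
            apply mul_le_mul_of_nonneg_right _ hD
            exact mul_le_mul_of_nonneg_right hMc hρz.le
        _ = c⁻¹ * ((B * ρ ‖z‖) * (c * D)) := by field_simp
        _ ≤ c⁻¹ * ((B * ρ ‖z‖) * ‖K z‖^2) := by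
            apply mul_le_mul_of_nonneg_left _ (by positivity)
            exact mul_le_mul_of_nonneg_left hcd (by positivity)
        _ = c⁻¹ * (B * ‖K z‖^2 * ρ ‖z‖) := by ring
    calc ENNReal.ofReal (A ^ p * (2:ℝ) ^ (κ z) * ρ ‖z‖ / (1 - ‖z‖) ^ n)
        ≤ ENNReal.ofReal (c⁻¹ * ((inner ℂ (K z) (S (K z)) : ℂ).re * ρ ‖z‖)) :=
          ENNReal.ofReal_le_ofReal hreal
      _ = ENNReal.ofReal c⁻¹ * ENNReal.ofReal ((inner ℂ (K z) (S (K z)) : ℂ).re * ρ ‖z‖) :=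
          ENNReal.ofReal_mul (by positivity)
  refine lt_of_le_of_lt
    (lintegral_mono_ae ((ae_restrict_iff' measurableSet_ball).2 (ae_of_all _ hpt))) ?_
  rw [lintegral_const_mul' _ _ ENNReal.ofReal_ne_top, hI]
  exact ENNReal.mul_lt_top ENNReal.ofReal_lt_top hmem'
end
end

section
/- Let T be a positive bounded operator on A²_ρ and 0 < p ≤ 1. If ∫_{𝔹_n} T̃(z)^p dλ_ρ(z) < ∞, then T ∈ S_p. -/
open MeasureTheory
open scoped ENNReal NNReal

noncomputable section

section Aux
variable {H : Type*} [NormedAddCommGroup H] [InnerProductSpace ℂ H] [CompleteSpace H]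
lemma scalar_ineq (ε t : ℝ≥0) (p : ℝ) (hp : 0 < p) (hp1 : p ≤ 1) (hε : 0 < ε) :
    t ^ p ≤ ε ^ p + ε ^ (p - 1) * t := by
  rcases le_total t ε with h | h
  · exact le_add_of_le_of_nonneg (NNReal.rpow_le_rpow h hp.le) zero_le
  · have ht : 0 < t := lt_of_lt_of_le hε h
    have h1 : t ^ p = t ^ (p - 1) * t := by
      nth_rewrite 3 [← NNReal.rpow_one t]
      rw [← NNReal.rpow_add ht.ne']
      norm_num
    rw [h1]
    refine le_add_of_nonneg_of_le zero_le ?_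
    have := NNReal.rpow_le_rpow_of_nonpos hε h (z := p - 1) (by linarith)
    exact mul_le_mul_of_nonneg_right this zero_le

lemma op_ineq (T : H →L[ℂ] H) (hT : 0 ≤ T) (p : ℝ) (hp : 0 < p) (hp1 : p ≤ 1)
    (ε : ℝ≥0) (hε : 0 < ε) :
    CFC.rpow T p ≤ (ε ^ p : ℝ≥0) • (1 : H →L[ℂ] H) + (ε ^ (p - 1) : ℝ≥0) • T := by
  have h1 : (ε ^ p : ℝ≥0) • (1 : H →L[ℂ] H) + (ε ^ (p - 1) : ℝ≥0) • T
      = cfc (fun x : ℝ≥0 => ε ^ p + ε ^ (p - 1) * x) T := by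
    rw [cfc_add (a := T) (f := fun _ : ℝ≥0 => ε ^ p) (g := fun x : ℝ≥0 => ε ^ (p-1) * x),
      cfc_const _ T, cfc_const_mul_id _ T, Algebra.algebraMap_eq_smul_one]
  rw [h1, show CFC.rpow T p = cfc (fun x : ℝ≥0 => x ^ p) T from rfl]
  exact cfc_mono (fun x _ => scalar_ineq ε x p hp hp1 hε)
    ((NNReal.continuous_rpow_const hp.le).continuousOn)
    (((continuous_const).add (continuous_const.mul continuous_id)).continuousOn)

lemma re_inner_real_smul (x y : H) (r : ℝ) :
    (inner ℂ x (r • y) : ℂ).re = r * (inner ℂ x y : ℂ).re := by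
  rw [← Complex.coe_smul, inner_smul_right, Complex.re_ofReal_mul]

lemma vec_key (T : H →L[ℂ] H) (hT : T.IsPositive) {p : ℝ} (hp : 0 < p) (hp1 : p ≤ 1)
    (x : H) (hx : ‖x‖ = 1) (ε : ℝ≥0) (hε : 0 < ε) :
    (inner ℂ x (CFC.rpow T p x) : ℂ).re ≤ (ε:ℝ)^p + (ε:ℝ)^(p-1) * (inner ℂ x (T x) : ℂ).re := by
  have hT0 : 0 ≤ T := (ContinuousLinearMap.nonneg_iff_isPositive T).2 hT
  have hle := op_ineq T hT0 p hp hp1 ε hε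
  rw [ContinuousLinearMap.le_def] at hle
  have h2 := hle.re_inner_nonneg_right x
  simp only [ContinuousLinearMap.sub_apply, ContinuousLinearMap.add_apply,
    ContinuousLinearMap.smul_apply, ContinuousLinearMap.one_apply, inner_sub_right,
    inner_add_right, NNReal.smul_def, map_sub, map_add, RCLike.re_to_complex,
    re_inner_real_smul, NNReal.coe_rpow] at h2
  have hxx : (inner ℂ x x : ℂ).re = 1 := by
    have := inner_self_eq_norm_sq (𝕜 := ℂ) x
    rw [RCLike.re_to_complex] at this
    rw [this, hx]; norm_num
  rw [hxx] at h2
  linarith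

lemma vec_ineq (T : H →L[ℂ] H) (hT : T.IsPositive) {p : ℝ} (hp : 0 < p) (hp1 : p ≤ 1)
    (x : H) (hx : ‖x‖ = 1) :
    (inner ℂ x (CFC.rpow T p x) : ℂ).re ≤ 2 * ((inner ℂ x (T x) : ℂ).re) ^ p := by
  set a : ℝ := (inner ℂ x (T x) : ℂ).re with ha
  have ha0 : 0 ≤ a := by
    have := hT.re_inner_nonneg_right x
    simpa [RCLike.re_to_complex] using this
  rcases eq_or_lt_of_le ha0 with h0 | h0
  · -- a = 0
    have hS : (CFC.rpow T p).IsPositive := by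
      rw [← ContinuousLinearMap.nonneg_iff_isPositive]
      exact CFC.rpow_nonneg
    have hS0 : 0 ≤ (inner ℂ x (CFC.rpow T p x) : ℂ).re := by
      simpa [RCLike.re_to_complex] using hS.re_inner_nonneg_right x
    have hle : (inner ℂ x (CFC.rpow T p x) : ℂ).re ≤ 0 := by
      refine le_of_forall_pos_le_add fun c hc => ?_
      have hcp : (0:ℝ≥0) < c.toNNReal ^ (1/p) :=
        NNReal.rpow_pos (by simp [Real.toNNReal_pos.2 hc])
      have hk := vec_key T hT hp hp1 x hx _ hcp
      rw [← ha, ← h0, mul_zero, add_zero] at hk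
      refine hk.trans ?_
      rw [NNReal.coe_rpow, ← Real.rpow_mul (NNReal.coe_nonneg _),
        one_div, inv_mul_cancel₀ hp.ne', Real.rpow_one, Real.coe_toNNReal _ hc.le]
      simp
    have : (inner ℂ x (CFC.rpow T p x) : ℂ).re = 0 := le_antisymm hle hS0
    rw [this, ← h0, Real.zero_rpow hp.ne', mul_zero]
  · -- a > 0
    have hk := vec_key T hT hp hp1 x hx a.toNNReal (Real.toNNReal_pos.2 h0)
    rw [Real.coe_toNNReal _ ha0] at hk
    refine hk.trans ?_
    have : a ^ (p-1) * a = a ^ p := by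
      nth_rewrite 2 [← Real.rpow_one a]
      rw [← Real.rpow_add h0]
      norm_num
    rw [this]
    linarith

lemma re_inner_smul_smul (S : H →L[ℂ] H) (c : ℝ) (u : H) :
    (inner ℂ (c • u) (S (c • u)) : ℂ).re = c^2 * (inner ℂ u (S u) : ℂ).re := by
  have h1 : S (c • u) = c • S u := by
    rw [← Complex.coe_smul, _root_.map_smul, Complex.coe_smul]
  rw [h1, re_inner_real_smul, ← Complex.coe_smul, inner_smul_left, Complex.conj_ofReal,
    Complex.re_ofReal_mul]
  ring

lemma inner_sqrt (S : H →L[ℂ] H) (hS : 0 ≤ S) (x : H) :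
    (inner ℂ x (S x) : ℂ).re = ‖CFC.sqrt S x‖^2 := by
  set R := CFC.sqrt S with hR
  have hR0 : 0 ≤ R := CFC.sqrt_nonneg S
  have hRsa : IsSelfAdjoint R :=
    ((ContinuousLinearMap.nonneg_iff_isPositive R).1 hR0).isSelfAdjoint
  have hRR : R * R = S := CFC.sqrt_mul_sqrt_self S hS
  have h1 : S x = R (R x) := by rw [← hRR]; rfl
  rw [h1, ← ContinuousLinearMap.adjoint_inner_left, hRsa.adjoint_eq]
  have := inner_self_eq_norm_sq (𝕜 := ℂ) (R x)
  rw [RCLike.re_to_complex] at this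
  exact this

lemma parseval (e : HilbertBasis ℕ ℂ H) (y : H) :
    ∑' l, ((‖(inner ℂ (e l) y : ℂ)‖₊ : ℝ≥0∞))^2 = ((‖y‖₊ : ℝ≥0∞))^2 := by
  have h := e.hasSum_inner_mul_inner y y
  have h2 : HasSum (fun l => ‖(inner ℂ (e l) y : ℂ)‖^2) (‖y‖^2) := by
    have hre := Complex.hasSum_re h
    have hyy : (inner ℂ y y : ℂ).re = ‖y‖^2 := by
      have := inner_self_eq_norm_sq (𝕜 := ℂ) y
      rwa [RCLike.re_to_complex] at this
    rw [hyy] at hre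
    refine hre.congr_fun fun l => ?_
    rw [← inner_conj_symm (e l) y, Complex.mul_conj]
    simp only [Complex.sq_norm, Complex.ofReal_re]
    rw [← inner_conj_symm y (e l), Complex.normSq_conj]
  calc ∑' l, ((‖(inner ℂ (e l) y : ℂ)‖₊ : ℝ≥0∞))^2
      = ∑' l, ENNReal.ofReal (‖(inner ℂ (e l) y : ℂ)‖^2) := by
        refine tsum_congr fun l => ?_
        rw [ENNReal.ofReal_pow (norm_nonneg _), ofReal_norm, enorm_eq_nnnorm]
    _ = ENNReal.ofReal (∑' l, ‖(inner ℂ (e l) y : ℂ)‖^2) :=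
        (ENNReal.ofReal_tsum_of_nonneg (fun _ => sq_nonneg _) h2.summable).symm
    _ = ENNReal.ofReal (‖y‖^2) := by rw [h2.tsum_eq]
    _ = ((‖y‖₊ : ℝ≥0∞))^2 := by
        rw [ENNReal.ofReal_pow (norm_nonneg _), ofReal_norm, enorm_eq_nnnorm]

end Aux

set_option maxHeartbeats 1000000
set_option synthInstance.maxHeartbeats 400000

/-- See the docstring body: Schatten class membership of a
positive operator `T` on `A²_ρ` (ρ ∈ S, realized abstractly with kernel functions
`K z`, `‖K z‖² ≍ 2^{κ z}(1-|z|)^{-n}` on `Ω_{κ z}`) versus integrability of the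
Berezin transform `T̃(z) = ⟨T k_z, k_z⟩` against `dλ_ρ(z) = 2^{κ z} ρ(|z|)(1-|z|)^{-n} dv(z)`.
Membership `T ∈ S_p` is expressed by finiteness of `tr(T^p) = Σ_l ⟨T^p e_l, e_l⟩`. -/
theorem stmt17 (n : ℕ) (hn : 0 < n) (ρ : ℝ → ℝ) (hρ : Measurable ρ)
    (hρpos : ∀ x ∈ Set.Ico (0:ℝ) 1, 0 < ρ x)
    (r : ℕ → ℝ)
    (hr : ∀ k, r k ∈ Set.Ico (0:ℝ) 1)
    (hrk : ∀ k, ∫ x in (r k)..1, ρ x = (2:ℝ) ^ (-(k:ℝ)))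
    (hS : ∃ A > (1:ℝ), ∀ k, A ≤ (1 - r k) / (1 - r (k+1)))
    (κ : EuclideanSpace ℂ (Fin n) → ℕ) (hκmeas : Measurable κ)
    (hκ : ∀ z ∈ Metric.ball (0 : EuclideanSpace ℂ (Fin n)) 1,
      r (κ z) ≤ ‖z‖ ∧ ‖z‖ < r (κ z + 1))
    (H : Type*) [NormedAddCommGroup H] [InnerProductSpace ℂ H] [CompleteSpace H]
    (ι : H →ₗ[ℂ] EuclideanSpace ℂ (Fin n) → ℂ)
    (K : EuclideanSpace ℂ (Fin n) → H)
    (hKcont : Continuous K)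
    (hKne : ∀ z ∈ Metric.ball (0 : EuclideanSpace ℂ (Fin n)) 1, K z ≠ 0)
    (hrep : ∀ (f : H), ∀ z ∈ Metric.ball (0 : EuclideanSpace ℂ (Fin n)) 1,
      ι f z = (inner ℂ (K z) f : ℂ))
    (hmeas : ∀ f : H, Measurable (ι f))
    (hnorm : ∀ f : H,
      ∫⁻ z in Metric.ball (0 : EuclideanSpace ℂ (Fin n)) 1,
        (‖ι f z‖₊ : ℝ≥0∞) ^ 2 * ENNReal.ofReal (ρ ‖z‖) ∂volume = (‖f‖₊ : ℝ≥0∞) ^ 2)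
    (hKsize : ∃ c > (0:ℝ), ∃ C > (0:ℝ),
      ∀ z ∈ Metric.ball (0 : EuclideanSpace ℂ (Fin n)) 1,
        c * (2:ℝ) ^ (κ z) / (1 - ‖z‖) ^ n ≤ ‖K z‖ ^ 2 ∧
        ‖K z‖ ^ 2 ≤ C * (2:ℝ) ^ (κ z) / (1 - ‖z‖) ^ n)
    (T : H →L[ℂ] H) (hT : T.IsPositive) (p : ℝ) (hp : 0 < p ∧ p ≤ 1)
    (e : HilbertBasis ℕ ℂ H)
    (hmem : ∫⁻ z in Metric.ball (0 : EuclideanSpace ℂ (Fin n)) 1,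
      ENNReal.ofReal
        (((inner ℂ ((‖K z‖⁻¹ : ℝ) • K z) (T ((‖K z‖⁻¹ : ℝ) • K z)) : ℂ).re) ^ p
          * (2:ℝ) ^ (κ z) * ρ ‖z‖ / (1 - ‖z‖) ^ n) ∂volume < ⊤) :
    ∑' l : ℕ, ENNReal.ofReal ((inner ℂ (e l) (CFC.rpow T p (e l)) : ℂ).re) < ⊤ := by
  obtain ⟨hp0, hp1⟩ := hp
  obtain ⟨c, hc, C, hC, hsize⟩ := hKsize
  set B := Metric.ball (0 : EuclideanSpace ℂ (Fin n)) 1 with hB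
  set S := CFC.rpow T p with hSdef
  have hS0 : (0 : H →L[ℂ] H) ≤ S := CFC.rpow_nonneg
  obtain ⟨R, hRsa, hRsq⟩ : ∃ R : H →L[ℂ] H, IsSelfAdjoint R ∧
      ∀ x : H, (inner ℂ x (S x) : ℂ).re = ‖R x‖^2 := by
    refine ⟨CFC.sqrt S, ?_, fun x => inner_sqrt S hS0 x⟩
    exact ((ContinuousLinearMap.nonneg_iff_isPositive _).1 (CFC.sqrt_nonneg S)).isSelfAdjoint
  -- each term of the sum as an integral
  have step1 : ∀ l, ENNReal.ofReal ((inner ℂ (e l) (S (e l)) : ℂ).re)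
      = ∫⁻ z in B, (‖ι (R (e l)) z‖₊ : ℝ≥0∞)^2 * ENNReal.ofReal (ρ ‖z‖) ∂volume := by
    intro l
    rw [hRsq, ENNReal.ofReal_pow (norm_nonneg _), ofReal_norm, enorm_eq_nnnorm,
      ← hnorm (R (e l))]
  have hmeas' : ∀ l : ℕ, AEMeasurable
      (fun z => (‖ι (R (e l)) z‖₊ : ℝ≥0∞)^2 * ENNReal.ofReal (ρ ‖z‖))
      (volume.restrict B) := by
    intro l
    exact ((((hmeas (R (e l))).nnnorm.coe_nnreal_ennreal).pow_const 2).mul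
      ((hρ.comp measurable_norm).ennreal_ofReal)).aemeasurable
  -- pointwise bound on the ball
  have hpt : ∀ z ∈ B,
      (∑' l, (‖ι (R (e l)) z‖₊ : ℝ≥0∞)^2) * ENNReal.ofReal (ρ ‖z‖)
        ≤ ENNReal.ofReal (2 * C) * ENNReal.ofReal
          ((((inner ℂ ((‖K z‖⁻¹ : ℝ) • K z) (T ((‖K z‖⁻¹ : ℝ) • K z)) : ℂ).re) ^ p
            * (2:ℝ) ^ (κ z) * ρ ‖z‖ / (1 - ‖z‖) ^ n)) := by
    intro z hz
    have hz1 : ‖z‖ < 1 := by simpa [B, mem_ball_zero_iff] using hz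
    have hz0 : (0:ℝ) ≤ ‖z‖ := norm_nonneg _
    have hρz : 0 < ρ ‖z‖ := hρpos _ ⟨hz0, hz1⟩
    have hKz : K z ≠ 0 := hKne z hz
    have hKn : ‖K z‖ ≠ 0 := norm_ne_zero_iff.2 hKz
    set u : H := (‖K z‖⁻¹ : ℝ) • K z with hu
    have hu1 : ‖u‖ = 1 := by
      rw [hu, norm_smul, Real.norm_eq_abs, abs_of_nonneg (inv_nonneg.2 (norm_nonneg _)),
        inv_mul_cancel₀ hKn]
    have hKu : K z = (‖K z‖ : ℝ) • u := by
      rw [hu, smul_smul, mul_inv_cancel₀ hKn, one_smul]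
    set q : ℝ := ((inner ℂ u (T u) : ℂ).re) ^ p with hq
    have hq0 : 0 ≤ q := by
      apply Real.rpow_nonneg
      have := hT.re_inner_nonneg_right u
      simpa [RCLike.re_to_complex] using this
    -- identify the tsum
    have t1 : (∑' l, (‖ι (R (e l)) z‖₊ : ℝ≥0∞)^2)
        = ((‖R (K z)‖₊ : ℝ≥0∞))^2 := by
      rw [← parseval e (R (K z))]
      refine tsum_congr fun l => ?_
      rw [hrep _ z hz]
      have h1 : (inner ℂ (K z) (R (e l)) : ℂ) = inner ℂ (R (K z)) (e l) := by
        rw [← ContinuousLinearMap.adjoint_inner_left, hRsa.adjoint_eq]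
      have h2 : ‖(inner ℂ (K z) (R (e l)) : ℂ)‖₊ = ‖(inner ℂ (e l) (R (K z)) : ℂ)‖₊ := by
        rw [h1, ← inner_conj_symm]
        exact nnnorm_star _
      rw [h2]
    rw [t1]
    -- bound the norm squared
    have t2 : (‖R (K z)‖ : ℝ)^2 = ‖K z‖^2 * (inner ℂ u (S u) : ℂ).re := by
      have h3 := re_inner_smul_smul S (‖K z‖ : ℝ) u
      rw [← hKu] at h3
      rw [← hRsq, h3]
    have t3 : (inner ℂ u (S u) : ℂ).re ≤ 2 * q := vec_ineq T hT hp0 hp1 u hu1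
    have t4 : ‖K z‖^2 ≤ C * (2:ℝ) ^ (κ z) / (1 - ‖z‖) ^ n := (hsize z hz).2
    have hSu0 : 0 ≤ (inner ℂ u (S u) : ℂ).re := by
      have := ((ContinuousLinearMap.nonneg_iff_isPositive S).1 hS0).re_inner_nonneg_right u
      simpa [RCLike.re_to_complex] using this
    have hfrac : (0:ℝ) ≤ C * (2:ℝ) ^ (κ z) / (1 - ‖z‖) ^ n :=
      le_trans (sq_nonneg _) (by simpa [sq] using t4)
    have treal : (‖R (K z)‖ : ℝ)^2 * ρ ‖z‖
        ≤ (2 * C) * (q * (2:ℝ) ^ (κ z) * ρ ‖z‖ / (1 - ‖z‖) ^ n) := by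
      rw [t2]
      have hbound : ‖K z‖^2 * (inner ℂ u (S u) : ℂ).re
          ≤ (C * (2:ℝ) ^ (κ z) / (1 - ‖z‖) ^ n) * (2 * q) := by
        apply mul_le_mul t4 t3 hSu0 hfrac
      calc ‖K z‖^2 * (inner ℂ u (S u) : ℂ).re * ρ ‖z‖
          ≤ ((C * (2:ℝ) ^ (κ z) / (1 - ‖z‖) ^ n) * (2 * q)) * ρ ‖z‖ := by
            exact mul_le_mul_of_nonneg_right hbound hρz.le
        _ = (2 * C) * (q * (2:ℝ) ^ (κ z) * ρ ‖z‖ / (1 - ‖z‖) ^ n) := by ring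
    calc ((‖R (K z)‖₊ : ℝ≥0∞))^2 * ENNReal.ofReal (ρ ‖z‖)
        = ENNReal.ofReal ((‖R (K z)‖ : ℝ)^2 * ρ ‖z‖) := by
          rw [ENNReal.ofReal_mul (sq_nonneg _), ENNReal.ofReal_pow (norm_nonneg _),
            ofReal_norm, enorm_eq_nnnorm]
      _ ≤ ENNReal.ofReal ((2 * C) * (q * (2:ℝ) ^ (κ z) * ρ ‖z‖ / (1 - ‖z‖) ^ n)) :=
          ENNReal.ofReal_le_ofReal treal
      _ = ENNReal.ofReal (2 * C) * ENNReal.ofReal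
            (q * (2:ℝ) ^ (κ z) * ρ ‖z‖ / (1 - ‖z‖) ^ n) := by
          rw [ENNReal.ofReal_mul (by positivity)]
  -- put everything together
  calc ∑' l : ℕ, ENNReal.ofReal ((inner ℂ (e l) (S (e l)) : ℂ).re)
      = ∑' l : ℕ, ∫⁻ z in B, (‖ι (R (e l)) z‖₊ : ℝ≥0∞)^2
          * ENNReal.ofReal (ρ ‖z‖) ∂volume := tsum_congr step1
    _ = ∫⁻ z in B, ∑' l : ℕ, (‖ι (R (e l)) z‖₊ : ℝ≥0∞)^2
          * ENNReal.ofReal (ρ ‖z‖) ∂volume := (lintegral_tsum hmeas').symm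
    _ = ∫⁻ z in B, (∑' l : ℕ, (‖ι (R (e l)) z‖₊ : ℝ≥0∞)^2)
          * ENNReal.ofReal (ρ ‖z‖) ∂volume := by
          refine lintegral_congr fun z => ?_
          rw [ENNReal.tsum_mul_right]
    _ ≤ ∫⁻ z in B, ENNReal.ofReal (2 * C) * ENNReal.ofReal
          ((((inner ℂ ((‖K z‖⁻¹ : ℝ) • K z) (T ((‖K z‖⁻¹ : ℝ) • K z)) : ℂ).re) ^ p
            * (2:ℝ) ^ (κ z) * ρ ‖z‖ / (1 - ‖z‖) ^ n)) ∂volume := by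
          refine lintegral_mono_ae ?_
          exact (ae_restrict_mem measurableSet_ball).mono hpt
    _ = ENNReal.ofReal (2 * C) * ∫⁻ z in B, ENNReal.ofReal
          ((((inner ℂ ((‖K z‖⁻¹ : ℝ) • K z) (T ((‖K z‖⁻¹ : ℝ) • K z)) : ℂ).re) ^ p
            * (2:ℝ) ^ (κ z) * ρ ‖z‖ / (1 - ‖z‖) ^ n)) ∂volume :=
          lintegral_const_mul' _ _ ENNReal.ofReal_ne_top
    _ < ⊤ := ENNReal.mul_lt_top ENNReal.ofReal_lt_top hmem
end
end
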